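/- Let λ be a real number and v a real vector indexed by the directed edges of G with Bv = λv and vᵀPv = 1, and let v̄ = (v¹, …, vⁿ) where vⁱ = Σ_j a_{ij} v_{j→i}, with v̄ ≠ 0. Let f ∈ ℝⁿ be parallel to v̄ (f = (‖f‖/‖v̄‖) v̄) with ‖f‖² = 1/(λ² + 1) (so that (f, −λf) is a unit vector). Then ‖v̄‖² (1 − fᵀ D f) = λ(λ² − 1) ‖f‖², where D is the diagonal matrix of node degrees of G; equivalently, if fᵀ D f ≠ 1, ‖v̄‖ = μ ‖f‖ with μ = sqrt(λ(λ² − 1)/(1 − fᵀ D f)). -/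

import Mathlib

open Matrix

/-- The non-backtracking matrix of a simple graph `G`: rows and columns are indexed by
darts (directed edges); entry `(k→l, i→j)` is `δ_{jk} (1 - δ_{il})`. -/
def nbMatrix {V : Type*} [DecidableEq V] (G : SimpleGraph V) :
    Matrix G.Dart G.Dart ℝ := fun r c =>
  (if c.toProd.2 = r.toProd.1 then (1 : ℝ) else 0) *
  (if c.toProd.1 = r.toProd.2 then 0 else 1)


/-- The edge-swap (involution) matrix `P` on vectors indexed by the darts of `G`:
`(Pz)_{i→j} = z_{j→i}`. -/
def swapMat {V : Type*} [DecidableEq V] (G : SimpleGraph V) :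
    Matrix G.Dart G.Dart ℝ := fun r s => if s = r.symm then 1 else 0

/-- `vⁱ = Σ_j a_{ij} v_{j→i}`: the sum of the entries of `v` over darts pointing at `i`. -/
def vertSum {V : Type*} [Fintype V] [DecidableEq V] (G : SimpleGraph V) [DecidableRel G.Adj]
    (v : G.Dart → ℝ) (i : V) : ℝ :=
  ∑ e : G.Dart, if e.toProd.2 = i then v e else 0

lemma nb_mulVec_apply {V : Type*} [Fintype V] [DecidableEq V] (G : SimpleGraph V)
    [DecidableRel G.Adj] (v : G.Dart → ℝ) (d : G.Dart) :
    (nbMatrix G).mulVec v d = vertSum G v d.toProd.1 - v d.symm := by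
  have hsymm : v d.symm = ∑ e : G.Dart, if e = d.symm then v e else 0 := by
    rw [Finset.sum_ite_eq' Finset.univ d.symm v]
    simp
  rw [eq_sub_iff_add_eq, hsymm]
  simp only [Matrix.mulVec, dotProduct, nbMatrix, vertSum, ← Finset.sum_add_distrib]
  refine Finset.sum_congr rfl fun e _ => ?_
  by_cases h : e = d.symm
  · subst h
    simp
  · have h2 : ¬ (e.toProd.2 = d.toProd.1 ∧ e.toProd.1 = d.toProd.2) := by
      intro ⟨ha, hb⟩
      exact h (SimpleGraph.Dart.ext _ _ (Prod.ext hb ha))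
    by_cases ha : e.toProd.2 = d.toProd.1
    · have hb : e.toProd.1 ≠ d.toProd.2 := fun hb => h2 ⟨ha, hb⟩
      simp [ha, hb, h]
    · simp [ha, h]

lemma swap_mulVec_apply {V : Type*} [Fintype V] [DecidableEq V] (G : SimpleGraph V)
    [DecidableRel G.Adj] (v : G.Dart → ℝ) (d : G.Dart) :
    (swapMat G).mulVec v d = v d.symm := by
  simp only [Matrix.mulVec, dotProduct, swapMat]
  rw [Finset.sum_congr rfl fun e _ => (by split <;> simp_all : (if e = d.symm then (1:ℝ) else 0) * v e = if e = d.symm then v e else 0)]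
  rw [Finset.sum_ite_eq' Finset.univ d.symm v]
  simp

theorem vbar_norm_mu_f {V : Type*} [Fintype V] [DecidableEq V]
    (G : SimpleGraph V) [DecidableRel G.Adj] (lam : ℝ) (v : G.Dart → ℝ)
    (heig : (nbMatrix G).mulVec v = lam • v)
    (hnorm : v ⬝ᵥ (swapMat G).mulVec v = 1)
    (vbar : V → ℝ) (hvbar : vbar = fun i => vertSum G v i) (hvbar0 : vbar ≠ 0)
    (f : V → ℝ)
    (hf : f = (Real.sqrt (f ⬝ᵥ f) / Real.sqrt (vbar ⬝ᵥ vbar)) • vbar)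
    (hfnorm : f ⬝ᵥ f = 1 / (lam ^ 2 + 1)) :
    (vbar ⬝ᵥ vbar) *
        (1 - f ⬝ᵥ (Matrix.diagonal fun i => (G.degree i : ℝ)).mulVec f) =
      lam * (lam ^ 2 - 1) * (f ⬝ᵥ f) ∧
    (f ⬝ᵥ (Matrix.diagonal fun i => (G.degree i : ℝ)).mulVec f ≠ 1 →
      Real.sqrt (vbar ⬝ᵥ vbar) =
        Real.sqrt (lam * (lam ^ 2 - 1) /
            (1 - f ⬝ᵥ (Matrix.diagonal fun i => (G.degree i : ℝ)).mulVec f)) *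
          Real.sqrt (f ⬝ᵥ f)) := by
  -- pointwise eigen-equation
  have key : ∀ d : G.Dart, lam * v d + v d.symm = vbar d.toProd.1 := by
    intro d
    have := congrFun heig d
    rw [nb_mulVec_apply] at this
    simp only [Pi.smul_apply, smul_eq_mul] at this
    rw [hvbar]
    linarith
  -- hnorm rewritten
  have hnorm' : ∑ d : G.Dart, v d * v d.symm = 1 := by
    rw [← hnorm]
    simp only [dotProduct]
    exact Finset.sum_congr rfl fun d _ => by rw [_root_.swap_mulVec_apply]
  -- sum over symm
  have hsymm_sum : ∀ (g : G.Dart → ℝ), ∑ d : G.Dart, g d.symm = ∑ d : G.Dart, g d :=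
    fun g => Function.Bijective.sum_comp (SimpleGraph.Dart.symm_involutive.bijective) g
  -- V in terms of darts
  set Vn : ℝ := vbar ⬝ᵥ vbar with hVn
  have hVdart : ∑ d : G.Dart, vbar d.toProd.2 * v d = Vn := by
    rw [hVn]
    simp only [dotProduct]
    have step : ∀ i : V, vbar i * vbar i
        = ∑ e : G.Dart, if e.toProd.2 = i then vbar i * v e else 0 := by
      intro i
      nth_rewrite 2 [hvbar]
      simp only [vertSum, Finset.mul_sum, mul_ite, mul_zero]
    rw [Finset.sum_congr rfl fun i _ => step i, Finset.sum_comm]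
    refine Finset.sum_congr rfl fun d _ => ?_
    rw [Finset.sum_ite_eq Finset.univ d.toProd.2 (fun i => vbar i * v d)]
    simp
  -- q sum
  set q : ℝ := ∑ d : G.Dart, vbar d.toProd.1 * vbar d.toProd.1 with hq
  have hqdeg : q = ∑ i : V, (G.degree i : ℝ) * (vbar i * vbar i) := by
    rw [hq]
    rw [← Finset.sum_fiberwise_of_maps_to (g := fun d : G.Dart => d.toProd.1)
      (fun d _ => Finset.mem_univ _)]
    refine Finset.sum_congr rfl fun i _ => ?_
    have step : ∀ d ∈ Finset.univ.filter (fun d : G.Dart => d.toProd.1 = i),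
        vbar d.toProd.1 * vbar d.toProd.1 = vbar i * vbar i := by
      intro d hd
      rw [(Finset.mem_filter.mp hd).2]
    rw [Finset.sum_congr rfl step, Finset.sum_const, nsmul_eq_mul]
    congr 1
    rw [← SimpleGraph.dart_fst_fiber_card_eq_degree]
  set S : ℝ := ∑ d : G.Dart, v d * v d with hS
  -- S = Vn - lam
  have hSV : Vn = S + lam := by
    have : ∑ d : G.Dart, (lam * v d + v d.symm) * v d.symm = Vn := by
      rw [← hVdart]
      refine Eq.trans (Finset.sum_congr rfl fun d _ => by rw [key d]) ?_
      have := hsymm_sum (fun d => vbar d.toProd.2 * v d)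
      rw [← this]
      refine Finset.sum_congr rfl fun d _ => by simp
    have hvsq : ∑ d : G.Dart, v d.symm * v d.symm = S := by
      rw [hS]; exact hsymm_sum (fun d => v d * v d)
    have hexp : ∑ d : G.Dart, (lam * v d + v d.symm) * v d.symm
        = lam * (∑ d : G.Dart, v d * v d.symm) + ∑ d : G.Dart, v d.symm * v d.symm := by
      rw [Finset.mul_sum, ← Finset.sum_add_distrib]
      exact Finset.sum_congr rfl fun d _ => by ring
    rw [hexp, hnorm', hvsq] at this
    linarith
  -- q = (lam^2+1) S + 2 lam
  have hqS : q = (lam ^ 2 + 1) * S + 2 * lam := by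
    have h1 : ∑ d : G.Dart, (lam * v d + v d.symm) * (lam * v d + v d.symm) = q := by
      rw [hq]; exact Finset.sum_congr rfl fun d _ => by rw [key d]
    have hvsq : ∑ d : G.Dart, v d.symm * v d.symm = S := by
      rw [hS]; exact hsymm_sum (fun d => v d * v d)
    have hexp : ∑ d : G.Dart, (lam * v d + v d.symm) * (lam * v d + v d.symm)
        = lam ^ 2 * S + 2 * lam * (∑ d : G.Dart, v d * v d.symm)
          + ∑ d : G.Dart, v d.symm * v d.symm := by
      rw [hS, Finset.mul_sum, Finset.mul_sum, ← Finset.sum_add_distrib,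
        ← Finset.sum_add_distrib]
      exact Finset.sum_congr rfl fun d _ => by ring
    rw [hexp, hnorm', hvsq] at h1
    linarith
  -- master identity
  have master : (lam ^ 2 + 1) * Vn - q = lam ^ 3 - lam := by
    rw [hqS]; nlinarith [hSV]
  -- f = c • vbar with c opaque
  obtain ⟨c, hc⟩ : ∃ c : ℝ, f = c • vbar := ⟨_, hf⟩
  set qf : ℝ := f ⬝ᵥ (Matrix.diagonal fun i => (G.degree i : ℝ)).mulVec f with hqf
  have hFF : f ⬝ᵥ f = c ^ 2 * Vn := by
    rw [hc, hVn]
    simp only [dotProduct, Pi.smul_apply, smul_eq_mul, Finset.mul_sum]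
    exact Finset.sum_congr rfl fun i _ => by ring
  have hqfc : qf = c ^ 2 * (∑ i : V, (G.degree i : ℝ) * (vbar i * vbar i)) := by
    rw [hqf, hc]
    simp only [dotProduct, Matrix.mulVec_diagonal, Pi.smul_apply, smul_eq_mul, Finset.mul_sum]
    exact Finset.sum_congr rfl fun i _ => by ring
  have hqfq : qf = c ^ 2 * q := by rw [hqfc, ← hqdeg]
  have hcV : c ^ 2 * Vn * (lam ^ 2 + 1) = 1 := by
    have h0 : (0:ℝ) < lam ^ 2 + 1 := by positivity
    rw [← hFF, hfnorm]
    field_simp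
  have part1 : Vn * (1 - qf) = lam * (lam ^ 2 - 1) * (f ⬝ᵥ f) := by
    rw [hqfq, hFF]
    linear_combination (-Vn) * hcV + (c ^ 2 * Vn) * master
  refine ⟨part1, fun hne => ?_⟩
  have hFpos : (0:ℝ) < f ⬝ᵥ f := by
    rw [hfnorm]; positivity
  have hVnonneg : (0:ℝ) ≤ Vn := by
    rw [hVn]
    exact Finset.sum_nonneg fun i _ => mul_self_nonneg _
  have hne' : (1:ℝ) - qf ≠ 0 := sub_ne_zero.mpr (Ne.symm hne)
  have hdiv : lam * (lam ^ 2 - 1) / (1 - qf) = Vn / (f ⬝ᵥ f) := by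
    rw [div_eq_div_iff hne' (ne_of_gt hFpos)]
    linarith [part1]
  rw [hdiv, ← Real.sqrt_mul (by positivity) , div_mul_cancel₀ _ (ne_of_gt hFpos)]
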